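/- arXiv:1204.1940 — 3 statements merged into one kernel-verified Lean document; each statement's English description precedes it below -/
import Mathlib

section
/- Let H be a complex Hilbert space graded by a sequence (H_n)_{n∈ℕ} of pairwise orthogonal closed subspaces whose closed linear span is H, and let M and N be graded closed subspaces of H. Writing M_n = M ∩ H_n and N_n = N ∩ H_n, one has c(M,N) = sup_{n∈ℕ} c(M_n, N_n); equivalently, ‖P_M P_N − P_{M∩N}‖ = sup_{n∈ℕ} ‖P_{M_n} P_{N_n} − P_{M_n ∩ N_n}‖. -/
/-- The orthogonal projection onto a subspace `K` of a complex inner product space,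
as a bounded operator on the whole space (junk value `0` if `K` does not admit an
orthogonal projection; for a closed subspace of a Hilbert space it is the genuine
orthogonal projection). -/
noncomputable def proj {H : Type*} [NormedAddCommGroup H] [InnerProductSpace ℂ H]
    (K : Submodule ℂ H) : H →L[ℂ] H :=
  letI := Classical.propDecidable (Submodule.HasOrthogonalProjection K)
  if h : Submodule.HasOrthogonalProjection K then
    haveI := h
    K.subtypeL.comp (K.orthogonalProjectionOnto)
  else 0


section Helpers

open Submodule

variable {H : Type*} [NormedAddCommGroup H] [InnerProductSpace ℂ H]

local notation "⟪" x ", " y "⟫" => @inner ℂ _ _ x y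

lemma proj_def (K : Submodule ℂ H) [HasOrthogonalProjection K] :
    proj K = K.subtypeL.comp (orthogonalProjection K) := by
  simp only [proj]
  rw [dif_pos ‹_›]

lemma proj_apply (K : Submodule ℂ H) [HasOrthogonalProjection K] (x : H) :
    proj K x = (orthogonalProjection K x : H) := by
  rw [proj_def]; rfl

lemma proj_mem (K : Submodule ℂ H) [HasOrthogonalProjection K] (x : H) :
    proj K x ∈ K := by
  rw [proj_apply]; exact (orthogonalProjection K x).2

lemma proj_eq_self (K : Submodule ℂ H) [HasOrthogonalProjection K] {x : H} (h : x ∈ K) :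
    proj K x = x := by
  rw [proj_apply]; exact starProjection_eq_self_iff.mpr h

lemma proj_orth (K : Submodule ℂ H) [HasOrthogonalProjection K] {x : H} (h : x ∈ Kᗮ) :
    proj K x = 0 := by
  rw [proj_apply, orthogonalProjectionOnto_apply_of_mem_orthogonal h]
  rfl

lemma proj_inner (K : Submodule ℂ H) [HasOrthogonalProjection K] (x y : H) :
    ⟪proj K x, y⟫ = ⟪x, proj K y⟫ := by
  simpa [proj_apply] using inner_starProjection_left_eq_right K x y

lemma sub_proj_mem (K : Submodule ℂ H) [HasOrthogonalProjection K] (x : H) :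
    x - proj K x ∈ Kᗮ := by
  rw [proj_apply]; exact sub_starProjection_mem_orthogonal x

lemma eq_proj (K : Submodule ℂ H) [HasOrthogonalProjection K] {u v : H} (hv : v ∈ K)
    (ho : u - v ∈ Kᗮ) : proj K u = v := by
  rw [proj_apply]; exact eq_starProjection_of_mem_orthogonal hv ho

lemma norm_proj_apply_le (K : Submodule ℂ H) [HasOrthogonalProjection K] (x : H) :
    ‖proj K x‖ ≤ ‖x‖ := by
  rw [proj_apply]
  have h1 := (orthogonalProjection K).le_opNorm x
  have h2 := orthogonalProjection_norm_le K
  have : ‖(orthogonalProjection K x : H)‖ = ‖orthogonalProjection K x‖ := rfl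
  nlinarith [norm_nonneg x]

lemma norm_proj_le (K : Submodule ℂ H) [HasOrthogonalProjection K] : ‖proj K‖ ≤ 1 :=
  ContinuousLinearMap.opNorm_le_bound _ zero_le_one fun x => by
    rw [one_mul]; exact norm_proj_apply_le K x

lemma proj_idem (K : Submodule ℂ H) [HasOrthogonalProjection K] :
    proj K * proj K = proj K := by
  ext x
  exact proj_eq_self K (proj_mem K x)

lemma proj_inf (K L : Submodule ℂ H) [HasOrthogonalProjection K] [HasOrthogonalProjection L]
    [HasOrthogonalProjection (K ⊓ L)]
    (h : proj K * proj L = proj L * proj K) : proj K * proj L = proj (K ⊓ L) := by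
  ext x
  have hswap : proj K (proj L x) = proj L (proj K x) := by
    have := congrArg (fun (f : H →L[ℂ] H) => f x) h
    simpa [ContinuousLinearMap.mul_apply] using this
  have hmem : proj K (proj L x) ∈ K ⊓ L :=
    ⟨proj_mem K _, by rw [hswap]; exact proj_mem L _⟩
  have horth : x - proj K (proj L x) ∈ (K ⊓ L)ᗮ := by
    rw [Submodule.mem_orthogonal]
    intro u hu
    have h1 : ⟪u, proj K (proj L x)⟫ = ⟪u, x⟫ := by
      rw [← proj_inner K, proj_eq_self K hu.1, ← proj_inner L, proj_eq_self L hu.2]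
    rw [inner_sub_right, h1, sub_self]
  show proj K (proj L x) = proj (K ⊓ L) x
  exact (eq_proj (K ⊓ L) hmem horth).symm

lemma proj_comm (W U : Submodule ℂ H) [HasOrthogonalProjection W] [HasOrthogonalProjection U]
    (hinv : ∀ x ∈ W, proj U x ∈ W) : proj W * proj U = proj U * proj W := by
  ext x
  show proj W (proj U x) = proj U (proj W x)
  have hw : proj W x ∈ W := proj_mem W x
  have hw' : x - proj W x ∈ Wᗮ := sub_proj_mem W x
  have h1 : proj U (proj W x) ∈ W := hinv _ hw
  have h2 : proj U (x - proj W x) ∈ Wᗮ := by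
    rw [Submodule.mem_orthogonal]
    intro u hu
    rw [← proj_inner U]
    exact (Submodule.mem_orthogonal _ _).mp hw' _ (hinv u hu)
  have hdecomp : proj U x = proj U (proj W x) + proj U (x - proj W x) := by
    rw [← map_add]; congr 1; abel
  rw [hdecomp, map_add, proj_eq_self W h1, proj_orth W h2, add_zero]

lemma pyth {ι : Type*} (s : Finset ι) (g : ι → H)
    (h : ∀ i ∈ s, ∀ j ∈ s, i ≠ j → ⟪g i, g j⟫ = 0) :
    ‖∑ i ∈ s, g i‖ ^ 2 = ∑ i ∈ s, ‖g i‖ ^ 2 := by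
  classical
  induction s using Finset.induction_on with
  | empty => simp
  | @insert a s ha ih =>
    rw [Finset.sum_insert ha, Finset.sum_insert ha]
    have horth : ⟪g a, ∑ i ∈ s, g i⟫ = 0 := by
      rw [inner_sum]
      apply Finset.sum_eq_zero
      intro j hj
      exact h a (Finset.mem_insert_self a s) j (Finset.mem_insert_of_mem hj)
        (fun e => ha (e ▸ hj))
    rw [← ih (fun i hi j hj hij =>
      h i (Finset.mem_insert_of_mem hi) j (Finset.mem_insert_of_mem hj) hij)]
    have hns := @norm_add_sq ℂ H _ _ _ (g a) (∑ i ∈ s, g i)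
    rw [horth] at hns
    simpa using hns

end Helpers

/-- The cosine of the Friedrichs angle between two (closed) subspaces `M`, `N`:
`c(M,N) = ‖P_M P_N - P_{M ∩ N}‖`. -/
noncomputable def friedrichs {H : Type*} [NormedAddCommGroup H] [InnerProductSpace ℂ H]
    (M N : Submodule ℂ H) : ℝ :=
  ‖proj M * proj N - proj (M ⊓ N)‖

theorem stmt1 {H : Type*} [NormedAddCommGroup H] [InnerProductSpace ℂ H] [CompleteSpace H]
    -- a grading of `H`: pairwise orthogonal closed subspaces with dense linear span
    (V : ℕ → Submodule ℂ H) (hVclosed : ∀ n, IsClosed ((V n : Set H)))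
    (hVortho : ∀ m n, m ≠ n → ∀ x ∈ V m, ∀ y ∈ V n, (inner ℂ x y : ℂ) = 0)
    (hVdense : (⨆ n, V n).topologicalClosure = ⊤)
    -- graded closed subspaces `M` and `N`
    (M N : Submodule ℂ H) (hM : IsClosed (M : Set H)) (hN : IsClosed (N : Set H))
    (hMgraded : ∀ n, proj M * proj (V n) = proj (V n) * proj M)
    (hNgraded : ∀ n, proj N * proj (V n) = proj (V n) * proj N) :
    friedrichs M N = ⨆ n, friedrichs (M ⊓ V n) (N ⊓ V n) := by
  classical
  haveI : CompleteSpace M := hM.completeSpace_coe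
  haveI : CompleteSpace N := hN.completeSpace_coe
  haveI : ∀ n, CompleteSpace (V n) := fun n => (hVclosed n).completeSpace_coe
  have hclosed_inf : ∀ (A B : Submodule ℂ H), IsClosed (A : Set H) → IsClosed (B : Set H) →
      IsClosed ((A ⊓ B : Submodule ℂ H) : Set H) := by
    intro A B hA hB
    rw [Submodule.coe_inf]
    exact hA.inter hB
  haveI : CompleteSpace (M ⊓ N : Submodule ℂ H) := (hclosed_inf M N hM hN).completeSpace_coe
  haveI : ∀ n, CompleteSpace (M ⊓ V n : Submodule ℂ H) :=
    fun n => (hclosed_inf M (V n) hM (hVclosed n)).completeSpace_coe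
  haveI : ∀ n, CompleteSpace (N ⊓ V n : Submodule ℂ H) :=
    fun n => (hclosed_inf N (V n) hN (hVclosed n)).completeSpace_coe
  haveI : ∀ n, CompleteSpace (M ⊓ N ⊓ V n : Submodule ℂ H) :=
    fun n => (hclosed_inf _ (V n) (hclosed_inf M N hM hN) (hVclosed n)).completeSpace_coe
  -- key operator identities
  have hMQ : ∀ n, proj M * proj (V n) = proj (M ⊓ V n) := fun n => proj_inf _ _ (hMgraded n)
  have hNQ : ∀ n, proj N * proj (V n) = proj (N ⊓ V n) := fun n => proj_inf _ _ (hNgraded n)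
  have happ : ∀ (A B : H →L[ℂ] H), A = B → ∀ x, A x = B x := by
    intro A B hAB x; rw [hAB]
  have hMNcomm : ∀ n, proj (M ⊓ N) * proj (V n) = proj (V n) * proj (M ⊓ N) := by
    intro n
    apply proj_comm
    intro x hx
    constructor
    · have h1 : proj (V n) x = proj (V n) (proj M x) := by rw [proj_eq_self M hx.1]
      have h2 := happ _ _ (hMgraded n).symm x
      simp only [ContinuousLinearMap.mul_apply] at h2
      rw [h1, h2]
      exact proj_mem M _
    · have h1 : proj (V n) x = proj (V n) (proj N x) := by rw [proj_eq_self N hx.2]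
      have h2 := happ _ _ (hNgraded n).symm x
      simp only [ContinuousLinearMap.mul_apply] at h2
      rw [h1, h2]
      exact proj_mem N _
  have hMNQ : ∀ n, proj (M ⊓ N) * proj (V n) = proj (M ⊓ N ⊓ V n) :=
    fun n => proj_inf _ _ (hMNcomm n)
  set T : H →L[ℂ] H := proj M * proj N - proj (M ⊓ N) with hT
  -- each local friedrichs number is ‖T * proj (V n)‖
  have hfr : ∀ n, friedrichs (M ⊓ V n) (N ⊓ V n) = ‖T * proj (V n)‖ := by
    intro n
    have e0 : (M ⊓ V n) ⊓ (N ⊓ V n) = M ⊓ N ⊓ V n := (inf_inf_distrib_right M N (V n)).symm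
    have e1 : proj (M ⊓ V n) * proj (N ⊓ V n) = proj M * proj N * proj (V n) := by
      rw [← hMQ, ← hNQ]
      calc proj M * proj (V n) * (proj N * proj (V n))
          = proj M * (proj (V n) * proj N) * proj (V n) := by noncomm_ring
        _ = proj M * (proj N * proj (V n)) * proj (V n) := by rw [← hNgraded n]
        _ = proj M * proj N * (proj (V n) * proj (V n)) := by noncomm_ring
        _ = proj M * proj N * proj (V n) := by rw [proj_idem]
    unfold friedrichs
    rw [e0, e1, ← hMNQ, hT, sub_mul]
  -- T commutes with each proj (V n)
  have hTcomm : ∀ n, proj (V n) * T = T * proj (V n) := by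
    intro n
    rw [hT, mul_sub, sub_mul, ← hMNcomm n]
    congr 1
    calc proj (V n) * (proj M * proj N) = proj (V n) * proj M * proj N := by noncomm_ring
      _ = proj M * proj (V n) * proj N := by rw [hMgraded n]
      _ = proj M * (proj (V n) * proj N) := by noncomm_ring
      _ = proj M * (proj N * proj (V n)) := by rw [hNgraded n]
      _ = proj M * proj N * proj (V n) := by noncomm_ring
  -- reduce to a statement about norms
  have hub : ∀ n, ‖T * proj (V n)‖ ≤ ‖T‖ := by
    intro n
    calc ‖T * proj (V n)‖ ≤ ‖T‖ * ‖proj (V n)‖ := norm_mul_le _ _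
      _ ≤ ‖T‖ * 1 := mul_le_mul_of_nonneg_left (norm_proj_le _) (norm_nonneg T)
      _ = ‖T‖ := mul_one _
  have hbdd : BddAbove (Set.range fun n => ‖T * proj (V n)‖) := by
    refine ⟨‖T‖, ?_⟩
    rintro _ ⟨n, rfl⟩
    exact hub n
  set s : ℝ := ⨆ n, ‖T * proj (V n)‖ with hs
  have hs0 : 0 ≤ s := le_trans (norm_nonneg _) (le_ciSup hbdd 0)
  have hgoal : friedrichs M N = ‖T‖ := rfl
  rw [hgoal]
  have hrw : (⨆ n, friedrichs (M ⊓ V n) (N ⊓ V n)) = s := by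
    rw [hs]
    congr 1
    funext n
    exact hfr n
  rw [hrw]
  refine le_antisymm ?_ (ciSup_le hub)
  -- the hard direction: ‖T‖ ≤ s via density
  refine ContinuousLinearMap.opNorm_le_bound T hs0 ?_
  intro x
  have hsetC : IsClosed {y : H | ‖T y‖ ≤ s * ‖y‖} :=
    isClosed_le (T.continuous.norm) (continuous_const.mul continuous_norm)
  have hsub : ((⨆ n, V n : Submodule ℂ H) : Set H) ⊆ {y : H | ‖T y‖ ≤ s * ‖y‖} := by
    intro y hy
    obtain ⟨f, hf, hsum⟩ := (Submodule.mem_iSup_iff_exists_finsupp _ _).mp hy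
    rw [Finsupp.sum] at hsum
    have hy2 : ‖y‖ ^ 2 = ∑ i ∈ f.support, ‖f i‖ ^ 2 := by
      rw [← hsum]
      exact pyth _ _ (fun i _ j _ hij => hVortho i j hij _ (hf i) _ (hf j))
    have hTmem : ∀ i, T (f i) ∈ V i := by
      intro i
      have h1 : T (f i) = (T * proj (V i)) (f i) := by
        simp only [ContinuousLinearMap.mul_apply, proj_eq_self (V i) (hf i)]
      have h2 := happ _ _ (hTcomm i) (f i)
      simp only [ContinuousLinearMap.mul_apply] at h2
      rw [h1]
      simp only [ContinuousLinearMap.mul_apply]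
      rw [← h2]
      exact proj_mem (V i) _
    have hTy : T y = ∑ i ∈ f.support, T (f i) := by rw [← hsum, map_sum]
    have hTy2 : ‖T y‖ ^ 2 = ∑ i ∈ f.support, ‖T (f i)‖ ^ 2 := by
      rw [hTy]
      exact pyth _ _ (fun i _ j _ hij => hVortho i j hij _ (hTmem i) _ (hTmem j))
    have hbound : ∀ i, ‖T (f i)‖ ≤ s * ‖f i‖ := by
      intro i
      calc ‖T (f i)‖ = ‖(T * proj (V i)) (f i)‖ := by
            simp only [ContinuousLinearMap.mul_apply, proj_eq_self (V i) (hf i)]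
        _ ≤ ‖T * proj (V i)‖ * ‖f i‖ := ContinuousLinearMap.le_opNorm _ _
        _ ≤ s * ‖f i‖ := mul_le_mul_of_nonneg_right (le_ciSup hbdd i) (norm_nonneg _)
    have hsq : ‖T y‖ ^ 2 ≤ (s * ‖y‖) ^ 2 := by
      rw [hTy2]
      calc ∑ i ∈ f.support, ‖T (f i)‖ ^ 2
          ≤ ∑ i ∈ f.support, (s * ‖f i‖) ^ 2 := by
            apply Finset.sum_le_sum
            intro i _
            exact pow_le_pow_left₀ (norm_nonneg _) (hbound i) 2
        _ = s ^ 2 * ∑ i ∈ f.support, ‖f i‖ ^ 2 := by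
            rw [Finset.mul_sum]
            apply Finset.sum_congr rfl
            intro i _
            ring
        _ = (s * ‖y‖) ^ 2 := by rw [← hy2]; ring
    show ‖T y‖ ≤ s * ‖y‖
    nlinarith [norm_nonneg (T y), mul_nonneg hs0 (norm_nonneg y), sq_nonneg (‖T y‖ - s * ‖y‖)]
  have hxmem : x ∈ closure ((⨆ n, V n : Submodule ℂ H) : Set H) := by
    have : x ∈ (⨆ n, V n : Submodule ℂ H).topologicalClosure := by
      rw [hVdense]; trivial
    exact this
  exact closure_minimal hsub hsetC hxmem
end

section
/- Let 𝔄 be a unital C*-algebra and let a, b ∈ 𝔄 be commuting self-adjoint elements with a ≤ b. If f is a continuous real-valued function on σ(a) ∪ σ(b) that is monotone increasing on σ(a) ∪ σ(b), then f(a) ≤ f(b), where f(a) and f(b) are formed via the continuous functional calculus. -/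
open StarSubalgebra in
theorem stmt9 {A : Type*} [CStarAlgebra A] [PartialOrder A] [StarOrderedRing A]
    (a b : A) (ha : IsSelfAdjoint a) (hb : IsSelfAdjoint b)
    (hcomm : a * b = b * a) (hle : a ≤ b) (f : ℝ → ℝ)
    (hf : ContinuousOn f (spectrum ℝ a ∪ spectrum ℝ b))
    (hmono : MonotoneOn f (spectrum ℝ a ∪ spectrum ℝ b)) :
    cfc f a ≤ cfc f b := by
  -- commutativity of the generators
  have hc : ∀ x ∈ ({a, b} : Set A), ∀ y ∈ ({a, b} : Set A), x * y = y * x := by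
    rintro x (rfl | rfl) y (rfl | rfl) <;> simp [hcomm]
  have hcs : ∀ x ∈ ({a, b} : Set A), ∀ y ∈ ({a, b} : Set A), x * star y = star y * x := by
    intro x hx y hy
    have hy' : star y = y := by rcases hy with rfl | rfl; exacts [ha.star_eq, hb.star_eq]
    rw [hy']; exact hc x hx y hy
  -- the commutative C*-subalgebra generated by a and b
  set S₀ : StarSubalgebra ℂ A := StarAlgebra.adjoin ℂ {a, b} with hS₀
  letI : CommRing S₀ := StarAlgebra.adjoinCommRingOfComm ℂ hc hcs
  set S : StarSubalgebra ℂ A := S₀.topologicalClosure with hS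
  haveI hScl : IsClosed (S : Set A) := isClosed_closure
  letI : CommRing S := S₀.commRingTopologicalClosure (fun x y => mul_comm x y)
  letI instS : CommCStarAlgebra S :=
    { StarSubalgebra.cstarAlgebra S with mul_comm := fun x y => mul_comm x y }
  have haS : a ∈ S := le_topologicalClosure _ (StarAlgebra.subset_adjoin ℂ _ (by simp))
  have hbS : b ∈ S := le_topologicalClosure _ (StarAlgebra.subset_adjoin ℂ _ (by simp))
  set a' : S := ⟨a, haS⟩ with ha'
  set b' : S := ⟨b, hbS⟩ with hb'
  have ha's : IsSelfAdjoint a' := Subtype.ext ha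
  have hb's : IsSelfAdjoint b' := Subtype.ext hb
  -- spectra of elements of S agree with spectra in A
  have hspec : ∀ x : S, spectrum ℝ x = spectrum ℝ (x : A) := by
    intro x
    ext r
    rw [← spectrum.algebraMap_mem_iff ℂ, ← spectrum.algebraMap_mem_iff ℂ (a := (x : A)),
      StarSubalgebra.spectrum_eq (hS := hScl)]
  -- cfc computed in S maps to cfc in A
  have hfa : ContinuousOn f (spectrum ℝ a) := hf.mono Set.subset_union_left
  have hfb : ContinuousOn f (spectrum ℝ b) := hf.mono Set.subset_union_right
  have hfa' : ContinuousOn f (spectrum ℝ a') := (hspec a') ▸ hfa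
  have hfb' : ContinuousOn f (spectrum ℝ b') := (hspec b') ▸ hfb
  have hmapa : (S.subtype : S →⋆ₐ[ℂ] A) (cfc f a') = cfc f a :=
    StarAlgHom.map_cfc (S.subtype) f a' hfa' continuous_subtype_val ha's ha
  have hmapb : (S.subtype : S →⋆ₐ[ℂ] A) (cfc f b') = cfc f b :=
    StarAlgHom.map_cfc (S.subtype) f b' hfb' continuous_subtype_val hb's hb
  -- the difference
  set d : S := cfc f b' - cfc f a' with hd
  have hds : IsSelfAdjoint d := ((cfc_predicate f b').sub (cfc_predicate f a'))
  have hcoe : (d : A) = cfc f b - cfc f a := by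
    rw [hd]
    push_cast
    rw [← hmapa, ← hmapb]; rfl
  rw [← sub_nonneg, ← hcoe]
  have hdsA : IsSelfAdjoint (d : A) := hds.map S.subtype
  rw [StarOrderedRing.nonneg_iff_spectrum_nonneg (R := ℝ) _ hdsA]
  intro r hr
  -- move to the spectrum over ℂ in S and find a character
  have hr' : (r : ℂ) ∈ spectrum ℂ d := by
    rw [StarSubalgebra.spectrum_eq (hS := hScl)]
    exact spectrum.algebraMap_mem ℂ hr
  obtain ⟨φ, hφ⟩ := WeakDual.CharacterSpace.mem_spectrum_iff_exists.mp hr'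
  -- the character evaluated at a' and b' gives reals in the spectra
  have hφa : IsSelfAdjoint (φ a') := ha's.map φ
  have hφb : IsSelfAdjoint (φ b') := hb's.map φ
  obtain ⟨ra, hra⟩ : ∃ x : ℝ, (x : ℂ) = φ a' := ⟨(φ a').re, (Complex.conj_eq_iff_re.mp hφa)⟩
  obtain ⟨rb, hrb⟩ : ∃ x : ℝ, (x : ℂ) = φ b' := ⟨(φ b').re, (Complex.conj_eq_iff_re.mp hφb)⟩
  have hra_mem : ra ∈ spectrum ℝ a := by
    rw [← spectrum.algebraMap_mem_iff ℂ]
    have := AlgHom.apply_mem_spectrum (φ : S →ₐ[ℂ] ℂ) a'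
    rw [StarSubalgebra.spectrum_eq (hS := hScl)] at this
    simpa [hra] using this
  have hrb_mem : rb ∈ spectrum ℝ b := by
    rw [← spectrum.algebraMap_mem_iff ℂ]
    have := AlgHom.apply_mem_spectrum (φ : S →ₐ[ℂ] ℂ) b'
    rw [StarSubalgebra.spectrum_eq (hS := hScl)] at this
    simpa [hrb] using this
  -- ra ≤ rb because b - a ≥ 0
  have hab : ra ≤ rb := by
    have hmem : φ (b' - a') ∈ spectrum ℂ ((b' - a' : S) : A) := by
      rw [← StarSubalgebra.spectrum_eq (hS := hScl)]
      exact AlgHom.apply_mem_spectrum (φ : S →ₐ[ℂ] ℂ) _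
    have hcoe' : ((b' - a' : S) : A) = b - a := by push_cast; rfl
    have : ((rb - ra : ℝ) : ℂ) ∈ spectrum ℂ (b - a) := by
      rw [← hcoe']
      simpa [map_sub, ← hra, ← hrb, Complex.ofReal_sub] using hmem
    have hmemR : rb - ra ∈ spectrum ℝ (b - a) :=
      spectrum.of_algebraMap_mem ℂ (by simpa using this)
    have := spectrum_nonneg_of_nonneg (sub_nonneg.mpr hle) hmemR
    linarith
  -- compute φ d
  have hφcfa : φ (cfc f a') = (f ra : ℂ) := by
    rw [StarAlgHomClass.map_cfc φ f a' hfa' (map_continuous φ) ha's hφa, ← hra]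
    simpa using cfc_algebraMap (R := ℝ) (A := ℂ) ra f
  have hφcfb : φ (cfc f b') = (f rb : ℂ) := by
    rw [StarAlgHomClass.map_cfc φ f b' hfb' (map_continuous φ) hb's hφb, ← hrb]
    simpa using cfc_algebraMap (R := ℝ) (A := ℂ) rb f
  have : (r : ℂ) = (f rb - f ra : ℝ) := by
    rw [← hφ, hd, map_sub, hφcfa, hφcfb, Complex.ofReal_sub]
  have hr_eq : r = f rb - f ra := by exact_mod_cast this
  rw [hr_eq, sub_nonneg]
  exact hmono (Set.mem_union_left _ hra_mem) (Set.mem_union_right _ hrb_mem) hab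
end

section
/- Let r ≥ 2 and let 𝔄 be a unital C*-algebra generated as a unital C*-algebra by projections p_1, …, p_r such that p_{i_1} p_{i_2} ⋯ p_{i_k} = 0 for every finite sequence of (not necessarily distinct) indices i_1, …, i_k with {i_1, …, i_k} = {1, …, r}. Then for every irreducible representation π of 𝔄 on a nonzero complex Hilbert space K, there exists an index i ∈ {1, …, r} such that π(p_i) = 0. -/
open scoped CStarAlgebra

theorem stmt13 {A : Type*} [CStarAlgebra A]
    {r : ℕ} (hr : 2 ≤ r) (p : Fin r → A)
    -- the `p i` are projections
    (hproj : ∀ i, IsSelfAdjoint (p i) ∧ IsIdempotentElem (p i))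
    -- which generate `A` as a unital C*-algebra
    (hgen : (StarAlgebra.adjoin ℂ (Set.range p)).topologicalClosure = ⊤)
    -- any product of the `p i` containing each of them at least once vanishes
    (hprod : ∀ l : List (Fin r), (∀ i, i ∈ l) → (l.map p).prod = 0)
    -- an irreducible representation `π` on a nonzero complex Hilbert space `K`
    (K : Type*) [NormedAddCommGroup K] [InnerProductSpace ℂ K] [CompleteSpace K]
    [Nontrivial K] (π : A →⋆ₐ[ℂ] (K →L[ℂ] K))
    (hirred : ∀ S : Submodule ℂ K, IsClosed (S : Set K) →
      (∀ a : A, ∀ x ∈ S, π a x ∈ S) → S = ⊥ ∨ S = ⊤) :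
    ∃ i, π (p i) = 0 := by
  by_contra hcon
  push_neg at hcon
  set q : Fin r → (K →L[ℂ] K) := fun i => π (p i) with hqdef
  have hqprod : ∀ l : List (Fin r), (l.map q).prod = π ((l.map p).prod) := by
    intro l
    rw [map_list_prod, List.map_map]
    rfl
  have hq0 : ∀ l : List (Fin r), (∀ i, i ∈ l) → (l.map q).prod = 0 := fun l hl => by
    rw [hqprod, hprod l hl, map_zero]
  -- the set of cardinalities of index sets of nonvanishing products
  set C : Set ℕ := {n | ∃ l : List (Fin r), l.toFinset.card = n ∧ (l.map q).prod ≠ 0} with hC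
  have hCne : C.Nonempty := by
    refine ⟨1, [⟨0, by omega⟩], by simp, ?_⟩
    simpa using hcon ⟨0, by omega⟩
  have hCbdd : BddAbove C := by
    refine ⟨r, fun n hn => ?_⟩
    obtain ⟨l, hl, -⟩ := hn
    simpa [hl.symm] using (Finset.card_le_univ l.toFinset).trans (by simp)
  obtain ⟨l, hlcard, hlne⟩ := Nat.sSup_mem hCne hCbdd
  have hmax : ∀ l' : List (Fin r), sSup C < l'.toFinset.card → (l'.map q).prod = 0 := by
    intro l' h
    by_contra hne
    exact absurd (le_csSup hCbdd ⟨l', rfl, hne⟩) (not_le.mpr h)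
  -- a maximal nonvanishing product `P` with index set `l.toFinset`
  set P : K →L[ℂ] K := (l.map q).prod with hPdef
  -- some index is missing from `l.toFinset`
  obtain ⟨j, hj⟩ : ∃ j, j ∉ l.toFinset := by
    by_contra h
    push_neg at h
    exact hlne (hq0 l fun i => List.mem_toFinset.mp (h i))
  -- key vanishing lemma
  have hkey : ∀ i : Fin r, i ∉ l.toFinset → ∀ l' : List (Fin r), (∀ k ∈ l', k ∈ l.toFinset) →
      q i * ((l'.map q).prod * P) = 0 := by
    intro i hi l' hl'
    have hcard : sSup C < ((i :: (l' ++ l)).toFinset).card := by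
      have hsub : (l' ++ l).toFinset = l.toFinset := by
        rw [List.toFinset_append]
        exact Finset.union_eq_right.mpr (fun k hk => hl' k (List.mem_toFinset.mp hk))
      rw [List.toFinset_cons, hsub, Finset.card_insert_of_notMem hi, hlcard]
      omega
    have h0 := hmax _ hcard
    calc q i * ((l'.map q).prod * P)
        = ((i :: (l' ++ l)).map q).prod := by
          simp [List.prod_cons, List.map_append, List.prod_append, hPdef, mul_assoc]
      _ = 0 := h0
  -- the invariant subspace
  set T : Set K := {y | ∃ l' : List (Fin r), (∀ k ∈ l', k ∈ l.toFinset) ∧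
      ∃ x : K, ((l'.map q).prod * P) x = y} with hT
  set N : Submodule ℂ K := Submodule.span ℂ T with hN
  set M : Submodule ℂ K := N.topologicalClosure with hM
  have hMcoe : (M : Set K) = closure (N : Set K) := rfl
  -- N is invariant under each q i
  have hNinv : ∀ i : Fin r, ∀ y ∈ N, q i y ∈ N := by
    intro i y hy
    induction hy using Submodule.span_induction with
    | mem y hy =>
      obtain ⟨l', hl', x, rfl⟩ := hy
      by_cases hi : i ∈ l.toFinset
      · refine Submodule.subset_span ⟨i :: l', ?_, x, ?_⟩
        · intro k hk
          rcases List.mem_cons.mp hk with h | h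
          · exact h ▸ hi
          · exact hl' k h
        · simp [List.prod_cons, mul_assoc, ContinuousLinearMap.mul_apply]
      · have h0 := hkey i hi l' hl'
        have heq : q i (((l'.map q).prod * P) x) = (q i * ((l'.map q).prod * P)) x := rfl
        rw [heq, h0]
        simp
    | zero => simp
    | add a b _ _ ha hb => simpa [map_add] using N.add_mem ha hb
    | smul c a _ ha => simpa [map_smul] using N.smul_mem c ha
  -- M is invariant under each q i
  have hMinvq : ∀ i : Fin r, ∀ x ∈ M, q i x ∈ M := by
    intro i x hx
    have hx' : x ∈ closure (N : Set K) := hx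
    show q i x ∈ closure (N : Set K)
    exact map_mem_closure (q i).continuous hx' (fun y hy => hNinv i y hy)
  -- every element of the algebra generated by the `p i` preserves M
  have hadj : ∀ a ∈ Algebra.adjoin ℂ (Set.range p), ∀ x ∈ M, π a x ∈ M := by
    intro a ha
    induction ha using Algebra.adjoin_induction with
    | mem b hb =>
      obtain ⟨i, rfl⟩ := hb
      exact hMinvq i
    | algebraMap c =>
      intro x hx
      rw [AlgHomClass.commutes, Algebra.algebraMap_eq_smul_one]
      simpa using M.smul_mem c hx
    | add b c _ _ hb hc =>
      intro x hx
      rw [map_add, ContinuousLinearMap.add_apply]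
      exact M.add_mem (hb x hx) (hc x hx)
    | mul b c _ _ hb hc =>
      intro x hx
      rw [map_mul, ContinuousLinearMap.mul_apply]
      exact hb _ (hc x hx)
  -- hence every π a preserves M, by continuity and density
  have hπinv : ∀ a : A, ∀ x ∈ M, π a x ∈ M := by
    have hstar : Set.range p ∪ star (Set.range p) = Set.range p := by
      apply Set.union_eq_self_of_subset_right
      rintro a ha
      rw [Set.mem_star] at ha
      obtain ⟨i, hi⟩ := ha
      exact ⟨i, by rw [← (hproj i).1.star_eq, hi, star_star]⟩
    have hadj' : (StarAlgebra.adjoin ℂ (Set.range p) : Set A) ⊆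
        {a : A | ∀ x ∈ M, π a x ∈ M} := by
      intro a ha
      have : a ∈ (StarAlgebra.adjoin ℂ (Set.range p)).toSubalgebra := ha
      rw [StarAlgebra.adjoin_toSubalgebra, hstar] at this
      exact hadj a this
    have hBclosed : IsClosed {a : A | ∀ x ∈ M, π a x ∈ M} := by
      have : {a : A | ∀ x ∈ M, π a x ∈ M} = ⋂ x ∈ (M : Set K), {a : A | π a x ∈ M} := by
        ext a; simp
      rw [this]
      refine isClosed_biInter fun x hx => ?_
      have hcont : Continuous fun a : A => π a x := by
        exact (ContinuousLinearMap.apply ℂ K x).continuous.comp (map_continuous π)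
      exact IsClosed.preimage hcont N.isClosed_topologicalClosure
    intro a
    have hmem : a ∈ closure (StarAlgebra.adjoin ℂ (Set.range p) : Set A) := by
      have : a ∈ ((StarAlgebra.adjoin ℂ (Set.range p)).topologicalClosure : Set A) := by
        rw [hgen]; trivial
      rwa [StarSubalgebra.topologicalClosure_coe] at this
    exact (closure_minimal hadj' hBclosed) hmem
  -- M is nonzero
  have hMne : M ≠ ⊥ := by
    obtain ⟨x, hx⟩ : ∃ x : K, P x ≠ 0 := by
      by_contra h
      push_neg at h
      exact hlne (ContinuousLinearMap.ext fun x => by simpa using h x)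
    have hxT : P x ∈ T := ⟨[], by simp, x, by simp⟩
    have hxM : P x ∈ M := N.le_topologicalClosure (Submodule.subset_span hxT)
    exact fun h => hx (by simpa [h] using hxM)
  -- so M = ⊤ by irreducibility
  have hMtop : M = ⊤ := by
    rcases hirred M N.isClosed_topologicalClosure hπinv with h | h
    · exact absurd h hMne
    · exact h
  -- but then q j = 0, contradiction
  have hNj : ∀ y ∈ N, q j y = 0 := by
    intro y hy
    induction hy using Submodule.span_induction with
    | mem y hy =>
      obtain ⟨l', hl', x, rfl⟩ := hy
      have heq : q j (((l'.map q).prod * P) x) = (q j * ((l'.map q).prod * P)) x := rfl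
      rw [heq, hkey j hj l' hl']
      rfl
    | zero => simp
    | add a b _ _ ha hb => simp [map_add, ha, hb]
    | smul c a _ ha => simp [map_smul, ha]
  have hqj : q j = 0 := by
    have hclosed : IsClosed {y : K | q j y = 0} := isClosed_eq (q j).continuous continuous_const
    have hsub : (N : Set K) ⊆ {y : K | q j y = 0} := hNj
    have : closure (N : Set K) ⊆ {y : K | q j y = 0} := closure_minimal hsub hclosed
    refine ContinuousLinearMap.ext fun x => ?_
    have hxM : x ∈ M := hMtop ▸ Submodule.mem_top
    have hxM' : x ∈ closure (N : Set K) := hxM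
    rw [ContinuousLinearMap.zero_apply]
    exact this hxM'
  exact hcon j hqj
end
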